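/- Let x : Fin n → ℝ and y : Fin n → ℝ be two nondecreasing sequences. Then for any permutation σ of Fin n, sum_i |x i - y i| ≤ sum_i |x i - y (σ i)|. That is, the identity matching is an optimal bipartite matching between two sorted sequences under absolute-difference cost. -/

import Mathlib

private lemma key_exchange (a b c d : ℝ) (hab : a ≤ b) (hcd : c ≤ d) :
    |a - c| + |b - d| ≤ |a - d| + |b - c| := by
  rcases abs_cases (a - c) with ⟨h1, h1'⟩ | ⟨h1, h1'⟩ <;>
  rcases abs_cases (b - d) with ⟨h2, h2'⟩ | ⟨h2, h2'⟩ <;>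
  rcases abs_cases (a - d) with ⟨h3, h3'⟩ | ⟨h3, h3'⟩ <;>
  rcases abs_cases (b - c) with ⟨h4, h4'⟩ | ⟨h4, h4'⟩ <;>
  rw [h1, h2, h3, h4] <;> linarith

theorem identity_matching_optimal (n : ℕ) (x y : Fin n → ℝ)
    (hx : Monotone x) (hy : Monotone y) (σ : Equiv.Perm (Fin n)) :
    ∑ i, |x i - y i| ≤ ∑ i, |x i - y (σ i)| := by
  induction n with
  | zero => simp
  | succ n ih =>
    set j : Fin (n + 1) := σ⁻¹ (Fin.last n) with hj
    have hσj : σ j = Fin.last n := by simp [hj]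
    set τ : Equiv.Perm (Fin (n + 1)) := σ * Equiv.swap j (Fin.last n) with hτ
    have hτlast : τ (Fin.last n) = Fin.last n := by
      simp [hτ, Equiv.swap_apply_right, hσj]
    have hτj : τ j = σ (Fin.last n) := by
      simp [hτ, Equiv.swap_apply_left]
    -- Step 1: sum over τ ≤ sum over σ
    have step1 : ∑ i, |x i - y (τ i)| ≤ ∑ i, |x i - y (σ i)| := by
      by_cases hjl : j = Fin.last n
      · have : τ = σ := by simp [hτ, hjl]; rfl
        rw [this]
      · have hsub : ({j, Fin.last n} : Finset (Fin (n+1))) ⊆ Finset.univ :=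
          Finset.subset_univ _
        rw [← Finset.sum_compl_add_sum {j, Fin.last n} (f := fun i => |x i - y (τ i)|),
            ← Finset.sum_compl_add_sum {j, Fin.last n} (f := fun i => |x i - y (σ i)|)]
        have heq : ∑ i ∈ ({j, Fin.last n} : Finset (Fin (n+1)))ᶜ, |x i - y (τ i)|
            = ∑ i ∈ ({j, Fin.last n} : Finset (Fin (n+1)))ᶜ, |x i - y (σ i)| := by
          apply Finset.sum_congr rfl
          intro i hi
          simp only [Finset.mem_compl, Finset.mem_insert, Finset.mem_singleton, not_or] at hi
          have : τ i = σ i := by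
            simp [hτ, Equiv.swap_apply_of_ne_of_ne hi.1 hi.2]
          rw [this]
        rw [heq]
        apply add_le_add_right
        rw [Finset.sum_pair hjl, Finset.sum_pair hjl, hτj, hτlast, hσj]
        exact key_exchange (x j) (x (Fin.last n)) (y (σ (Fin.last n))) (y (Fin.last n))
          (hx (Fin.le_last j)) (hy (Fin.le_last (σ (Fin.last n))))
    -- Step 2: τ fixes last, restrict to Fin n
    have hne : ∀ i : Fin n, τ i.castSucc ≠ Fin.last n := by
      intro i h
      have hcontra : i.castSucc = Fin.last n := τ.injective (by rw [h, hτlast])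
      exact (Fin.castSucc_lt_last i).ne hcontra
    set f : Fin n → Fin n := fun i => (τ i.castSucc).castPred (hne i) with hf
    have hfinj : Function.Injective f := by
      intro a b hab
      have : τ a.castSucc = τ b.castSucc := by
        have := congrArg Fin.castSucc hab
        simpa [hf, Fin.castSucc_castPred] using this
      exact Fin.castSucc_injective n (τ.injective this)
    set σ' : Equiv.Perm (Fin n) := Equiv.ofBijective f
      (Finite.injective_iff_bijective.mp hfinj) with hσ'
    have hσ'app : ∀ i : Fin n, (σ' i).castSucc = τ i.castSucc := by
      intro i
      simp [hσ', Equiv.ofBijective_apply, hf, Fin.castSucc_castPred]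
    have hcsmono : Monotone (Fin.castSucc : Fin n → Fin (n+1)) :=
      fun a b h => by simpa using h
    have ihres := ih (x ∘ Fin.castSucc) (y ∘ Fin.castSucc)
      (hx.comp hcsmono) (hy.comp hcsmono) σ'
    calc ∑ i, |x i - y i|
        = (∑ i : Fin n, |x i.castSucc - y i.castSucc|) + |x (Fin.last n) - y (Fin.last n)| := by
          rw [Fin.sum_univ_castSucc]
      _ ≤ (∑ i : Fin n, |x i.castSucc - y ((σ' i).castSucc)|)
            + |x (Fin.last n) - y (Fin.last n)| := by
          exact add_le_add_left ihres _
      _ = ∑ i, |x i - y (τ i)| := by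
          rw [Fin.sum_univ_castSucc (f := fun i => |x i - y (τ i)|), hτlast]
          refine congrArg₂ (· + ·) ?_ rfl
          exact Finset.sum_congr rfl fun i _ => by rw [hσ'app]
      _ ≤ ∑ i, |x i - y (σ i)| := step1
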